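/- Let γ > 0 have infinite continued fraction expansion [a_0; a_1, a_2, …] with convergents p_i/q_i. If γ = √D for squarefree D > 1 and α_i = p_i + q_i√D, then |N(α_i)| = |p_i² − D q_i²| < 2√D / a_{i+1} + 1/(a_{i+1} q_i²). -/

import Mathlib

/-- If `p i / q i` are the convergents of `√D` and `a_{i+1}` is the `(i+1)`-st partial
quotient, then `|p i ^ 2 - D * q i ^ 2| < 2√D / a_{i+1} + 1 / (a_{i+1} * q i ^ 2)`. -/
theorem stmt6 (D : ℕ) (hD : Squarefree D) (hD1 : 1 < D) (i : ℕ) (b : ℝ)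
    (hb : (GenContFract.of (Real.sqrt D)).partDens.get? i = some b) :
    |((GenContFract.of (Real.sqrt D)).nums i) ^ 2 -
        (D : ℝ) * ((GenContFract.of (Real.sqrt D)).dens i) ^ 2|
      < 2 * Real.sqrt D / b + 1 / (b * ((GenContFract.of (Real.sqrt D)).dens i) ^ 2) := by
  set s : ℝ := Real.sqrt D with hs
  set g := GenContFract.of s with hgdef
  set p : ℝ := g.nums i with hp
  set q : ℝ := g.dens i with hqdef
  have hD0 : (0:ℝ) < D := by exact_mod_cast Nat.zero_lt_of_lt hD1
  have hs0 : 0 < s := Real.sqrt_pos.mpr hD0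
  have hsD : Irrational s := by
    rw [hs, irrational_sqrt_natCast_iff]
    rintro ⟨k, hk⟩
    have hu : IsUnit k := hD k (by rw [hk])
    rw [Nat.isUnit_iff] at hu
    rw [hu] at hk
    omega
  have hb1 : (1:ℝ) ≤ b := GenContFract.of_one_le_get?_partDen hb
  have hb0 : (0:ℝ) < b := lt_of_lt_of_le zero_lt_one hb1
  have hterm : ¬g.TerminatedAt i := by
    simp [GenContFract.terminatedAt_iff_partDen_none, hb]
  have hq : 0 < q := by
    have h1 : (Nat.fib (i+1) : ℝ) ≤ q := by
      apply GenContFract.succ_nth_fib_le_of_nth_den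
      rcases Nat.eq_zero_or_pos i with h | h
      · exact Or.inl h
      · refine Or.inr fun hc => hterm ?_
        exact GenContFract.terminated_stable (Nat.sub_le i 1) hc
    have : 0 < Nat.fib (i+1) := Nat.fib_pos.2 i.succ_pos
    calc (0:ℝ) < (Nat.fib (i+1) : ℝ) := by exact_mod_cast this
      _ ≤ q := h1
  -- the approximation bound, made strict by irrationality
  have key : |s - g.convs i| ≤ 1 / (b * q * q) := GenContFract.abs_sub_convergents_le' hb
  have hne : |s - g.convs i| ≠ 1 / (b * q * q) := by
    intro heq
    obtain ⟨c, hc⟩ := GenContFract.exists_rat_eq_nth_conv (v := s) (n := i)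
    obtain ⟨z, hz⟩ := GenContFract.exists_int_eq_of_partDen hb
    obtain ⟨w, hw⟩ := GenContFract.exists_rat_eq_nth_den (v := s) (n := i)
    have hr : (1:ℝ) / (b * q * q) = ((1 / (z * w * w) : ℚ) : ℝ) := by
      rw [← hgdef] at hw
      rw [hqdef, hw, hz]
      push_cast
      ring
    rcases (abs_eq (by positivity)).mp heq with h | h
    · exact hsD ⟨c + 1 / (z * w * w), by push_cast [← hr, ← hc]; linarith⟩
    · exact hsD ⟨c - 1 / (z * w * w), by push_cast [← hr, ← hc]; linarith⟩
  have key' : |s - p / q| < 1 / (b * q * q) := by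
    rw [hp, hqdef, ← GenContFract.conv_eq_num_div_den]
    exact lt_of_le_of_ne key hne
  -- translate into a bound on |p - s q|
  have hA : |p - s * q| < 1 / (b * q) := by
    have h1 : |p - s * q| = |s - p / q| * q := by
      rw [abs_sub_comm s, show p - s * q = (p / q - s) * q by field_simp, abs_mul,
        abs_of_pos hq]
    rw [h1]
    have := mul_lt_mul_of_pos_right key' hq
    calc |s - p/q| * q < 1 / (b * q * q) * q := this
      _ = 1 / (b * q) := by field_simp
  have hA0 : 0 ≤ |p - s * q| := abs_nonneg _
  -- factor the norm
  have hfac : |p ^ 2 - (D:ℝ) * q ^ 2| = |p - s * q| * |p + s * q| := by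
    rw [← abs_mul]
    congr 1
    have h : s ^ 2 = D := Real.sq_sqrt hD0.le
    linear_combination q^2 * h
  have htri : |p + s * q| ≤ |p - s * q| + 2 * s * q := by
    have h2 : p + s * q = (p - s * q) + 2 * s * q := by ring
    calc |p + s * q| = |(p - s * q) + 2 * s * q| := by rw [← h2]
      _ ≤ |p - s * q| + |2 * s * q| := abs_add_le _ _
      _ = |p - s * q| + 2 * s * q := by rw [abs_of_nonneg (mul_nonneg (mul_nonneg (by norm_num) hs0.le) hq.le)]
  have hu : 1 / (b * q) ≤ 1 / q := by
    rw [div_le_div_iff₀ (by positivity) hq]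
    nlinarith
  calc |p ^ 2 - (D:ℝ) * q ^ 2| = |p - s*q| * |p + s*q| := hfac
    _ ≤ |p - s*q| * (|p - s*q| + 2*s*q) := mul_le_mul_of_nonneg_left htri hA0
    _ ≤ (1/(b*q)) * (|p - s*q| + 2*s*q) := by
        apply mul_le_mul_of_nonneg_right hA.le (by positivity)
    _ < (1/(b*q)) * (1/q + 2*s*q) := by
        apply mul_lt_mul_of_pos_left _ (by positivity)
        have hlt : |p - s*q| < 1/q := lt_of_lt_of_le hA hu
        linarith
    _ = 2 * s / b + 1 / (b * q ^ 2) := by field_simp; ring
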